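/- Let X ⊆ 𝕊, let φ ∈ B_♯^X(𝔻*), and let g be a Möbius transformation mapping 𝔻* bijectively onto itself such that there exists ξ ∈ 𝕊 with ξ ∉ X and gⁿ(w) → ξ as n → ∞ for every w ∈ 𝔻*. Then for every z ∈ 𝔻*, the iterated pullbacks converge to zero pointwise: (g*)ⁿφ(z) = φ(gⁿ(z)) · ((gⁿ)'(z))² → 0 as n → ∞. -/

import Mathlib

open MeasureTheory Filter Topology ENNReal

noncomputable section

/-- The open unit disk in the complex plane. -/
def unitDisk : Set ℂ := {z : ℂ | ‖z‖ < 1}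

/-- The unit circle in the complex plane. -/
def unitCircle : Set ℂ := {z : ℂ | ‖z‖ = 1}

/-- The essential supremum of `|μ|` over a subset `s` of the plane. -/
def essBnd (μ : ℂ → ℂ) (s : Set ℂ) : ℝ≥0∞ :=
  essSup (fun z => (‖μ z‖₊ : ℝ≥0∞)) (volume.restrict s)

/-- Membership in `L^∞(𝔻)`: essentially bounded measurable function on the unit disk. -/
def MemLinf (μ : ℂ → ℂ) : Prop :=
  AEStronglyMeasurable μ (volume.restrict unitDisk) ∧ essBnd μ unitDisk ≠ ⊤

/-- `μ` vanishes at the boundary relative to `X ⊆ 𝕊`: for every `ε > 0` there is a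
compact `K ⊆ 𝔻 ∪ X` with `ess sup_{𝔻 \ K} |μ| < ε`. -/
def VanishRel (X : Set ℂ) (μ : ℂ → ℂ) : Prop :=
  ∀ ε : ℝ, 0 < ε → ∃ K : Set ℂ, IsCompact K ∧ K ⊆ unitDisk ∪ X ∧
    essBnd μ (unitDisk \ K) < ENNReal.ofReal ε
/-- The exterior of the closed unit disk, `𝔻* = {z : |z| > 1}`. -/
def extDisk : Set ℂ := {z : ℂ | 1 < ‖z‖}

/-- The weight `(|z|² − 1)²` defining the norm of `B(𝔻*)`. -/
def bweight (z : ℂ) : ℝ := (‖z‖ ^ 2 - 1) ^ 2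

/-- Membership in `B(𝔻*)`: holomorphic on `𝔻*` with finite norm
`‖φ‖_B = sup (|z|²−1)² |φ(z)|`. -/
def MemB (φ : ℂ → ℂ) : Prop :=
  DifferentiableOn ℂ φ extDisk ∧
    ∃ M : ℝ, ∀ z ∈ extDisk, bweight z * ‖φ z‖ ≤ M

/-- `φ` vanishes at the boundary relative to `X ⊆ 𝕊`: for every `ε > 0` there is a
compact `K* ⊆ 𝔻* ∪ X` with `sup_{𝔻* \ K*} (|z|²−1)² |φ(z)| < ε`. -/
def BVanishRel (X : Set ℂ) (φ : ℂ → ℂ) : Prop :=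
  ∀ ε : ℝ, 0 < ε → ∃ K : Set ℂ, IsCompact K ∧ K ⊆ extDisk ∪ X ∧
    ∀ z ∈ extDisk \ K, bweight z * ‖φ z‖ < ε
/-- The Möbius transformation `z ↦ (az + b)/(cz + d)`. -/
def mobius (a b c d : ℂ) : ℂ → ℂ := fun z => (a * z + b) / (c * z + d)



lemma mem_extDisk_iff {z : ℂ} : z ∈ extDisk ↔ 1 < Complex.normSq z := by
  rw [← Complex.sq_norm]
  constructor
  · intro h; nlinarith [norm_nonneg z, (show (1:ℝ) < ‖z‖ from h)]
  · intro h
    have h0 := norm_nonneg z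
    show (1:ℝ) < ‖z‖
    nlinarith

lemma pole_unique {a b c d : ℂ} (hdet : a * d - b * c ≠ 0) {z w : ℂ}
    (hz : c * z + d = 0) (hw : c * w + d = 0) : z = w := by
  rcases eq_or_ne c 0 with rfl | hc
  · simp at hz; subst hz; simp at hdet
  · have h : c * z + d = c * w + d := by rw [hz, hw]
    exact mul_left_cancel₀ hc (add_right_cancel h)

lemma mobius_linv (a b c d : ℂ) (hdet : a * d - b * c ≠ 0) (z : ℂ) (hz : c * z + d ≠ 0) :
    mobius d (-b) (-c) a (mobius a b c d z) = z := by
  have h1 : d * ((a * z + b) / (c * z + d)) + -b = (a * d - b * c) * z / (c * z + d) := by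
    have hx : (a * z + b) / (c * z + d) * (c * z + d) = a * z + b := div_mul_cancel₀ _ hz
    rw [eq_div_iff hz]; linear_combination d * hx
  have h2 : -c * ((a * z + b) / (c * z + d)) + a = (a * d - b * c) / (c * z + d) := by
    field_simp; ring
  simp only [mobius, h1, h2]
  field_simp

lemma normSq_expand (a b c d : ℂ) (z : ℂ) :
    Complex.normSq (a * z + b) - Complex.normSq (c * z + d) =
      (Complex.normSq a - Complex.normSq c) * Complex.normSq z
        + 2 * ((a * (starRingEnd ℂ) b - c * (starRingEnd ℂ) d) * z).re
        + (Complex.normSq b - Complex.normSq d) := by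
  simp [Complex.normSq_apply, Complex.mul_re, Complex.mul_im, Complex.add_re, Complex.add_im,
    Complex.sub_re, Complex.sub_im, Complex.conj_re, Complex.conj_im]
  ring

lemma key_identity (a b c d : ℂ) (hdet : a * d - b * c ≠ 0)
    (hbij : Set.BijOn (mobius a b c d) (extDisk \ {z : ℂ | c * z + d = 0})
      (extDisk \ {a / c})) :
    ∃ A : ℝ, 0 < A ∧ ‖a * d - b * c‖ = A ∧
      ∀ z : ℂ, Complex.normSq (a * z + b) - Complex.normSq (c * z + d)
        = A * (Complex.normSq z - 1) := by
  set Q : ℂ → ℝ := fun z => Complex.normSq (a * z + b) - Complex.normSq (c * z + d) with hQdef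
  have hQcont : Continuous Q := by
    apply Continuous.sub <;> exact Complex.continuous_normSq.comp (by continuity)
  -- positivity on extDisk off the pole
  have step1 : ∀ z : ℂ, 1 < Complex.normSq z → c * z + d ≠ 0 → 0 < Q z := by
    intro z hz hz2
    have hm : mobius a b c d z ∈ extDisk := (hbij.mapsTo ⟨mem_extDisk_iff.2 hz, hz2⟩).1
    have h1 : (1:ℝ) < Complex.normSq (mobius a b c d z) := mem_extDisk_iff.1 hm
    have h2 : Complex.normSq (mobius a b c d z)
        = Complex.normSq (a * z + b) / Complex.normSq (c * z + d) := Complex.normSq_div _ _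
    have h3 : 0 < Complex.normSq (c * z + d) := Complex.normSq_pos.2 hz2
    rw [h2] at h1
    have := (one_lt_div h3).1 h1
    simp only [hQdef]
    linarith
  -- nonnegativity on extDisk
  have step1' : ∀ z : ℂ, 1 < Complex.normSq z → 0 ≤ Q z := by
    intro z hz
    by_cases hz2 : c * z + d = 0
    · simp only [hQdef, hz2]
      simp [Complex.normSq_nonneg]
    · exact (step1 z hz hz2).le
  -- nonnegativity on the circle by approximation
  have step2 : ∀ z : ℂ, Complex.normSq z = 1 → 0 ≤ Q z := by
    intro z hz
    have hzc : z ∈ closure {w : ℂ | 1 < Complex.normSq w} := by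
      apply mem_closure_iff_seq_limit.2
      refine ⟨fun n => ((1 + ((n:ℝ)+1)⁻¹ : ℝ) : ℂ) * z, ?_, ?_⟩
      · intro n
        have hn : (0:ℝ) < ((n:ℝ)+1)⁻¹ := by positivity
        have : Complex.normSq (((1 + ((n:ℝ)+1)⁻¹ : ℝ) : ℂ) * z)
            = (1 + ((n:ℝ)+1)⁻¹)^2 := by
          rw [Complex.normSq_mul, Complex.normSq_ofReal, hz]; ring
        show 1 < Complex.normSq _
        rw [this]; nlinarith
      · have h1 : Tendsto (fun n : ℕ => (1 + ((n:ℝ)+1)⁻¹ : ℝ)) atTop (𝓝 1) := by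
          have : Tendsto (fun n : ℕ => 1 / ((n : ℝ) + 1)) atTop (𝓝 0) :=
            tendsto_one_div_add_atTop_nhds_zero_nat
          simpa [one_div] using (tendsto_const_nhds (x := (1:ℝ))).add this
        have h2 : Tendsto (fun n : ℕ => ((1 + ((n:ℝ)+1)⁻¹ : ℝ) : ℂ)) atTop (𝓝 ((1:ℝ):ℂ)) :=
          (Complex.continuous_ofReal.tendsto 1).comp h1
        simpa using h2.mul tendsto_const_nhds
    have hcl : closure {w : ℂ | 1 < Complex.normSq w} ⊆ {w : ℂ | 0 ≤ Q w} :=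
      closure_minimal (fun w hw => step1' w hw) (isClosed_le continuous_const hQcont)
    exact hcl hzc
  -- nonpositivity (hence vanishing) on the circle off the pole
  have step3 : ∀ z : ℂ, Complex.normSq z = 1 → c * z + d ≠ 0 → Q z = 0 := by
    intro z hz hz2
    refine le_antisymm ?_ (step2 z hz)
    by_contra hpos
    push_neg at hpos
    have h3 : 0 < Complex.normSq (c * z + d) := Complex.normSq_pos.2 hz2
    have hm : (1:ℝ) < Complex.normSq (mobius a b c d z) := by
      have h2 : Complex.normSq (mobius a b c d z)
          = Complex.normSq (a * z + b) / Complex.normSq (c * z + d) := Complex.normSq_div _ _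
      rw [h2, lt_div_iff₀ h3]
      simp only [hQdef] at hpos
      linarith
    have hmne : mobius a b c d z ≠ a / c := by
      rcases eq_or_ne c 0 with rfl | hc
      · intro h
        rw [h] at hm
        norm_num at hm
      · intro h
        have : (a * z + b) * c = a * (c * z + d) := by
          have := (div_eq_div_iff hz2 hc).1 h
          linear_combination this
        have : b * c = a * d := by linear_combination this
        exact hdet (by rw [this]; ring)
    obtain ⟨z₁, hz₁, hmz₁⟩ := hbij.surjOn ⟨mem_extDisk_iff.2 hm, hmne⟩
    have hz₁2 : c * z₁ + d ≠ 0 := hz₁.2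
    have : z₁ = z := by
      have e1 := mobius_linv a b c d hdet z₁ hz₁2
      have e2 := mobius_linv a b c d hdet z hz2
      rw [hmz₁] at e1
      rw [← e1, e2]
    rw [this] at hz₁
    have := mem_extDisk_iff.1 hz₁.1
    rw [hz] at this
    norm_num at this
  -- coefficient extraction
  set A0 : ℝ := Complex.normSq a - Complex.normSq c with hA0
  set G0 : ℝ := Complex.normSq b - Complex.normSq d with hG0
  set β : ℂ := a * (starRingEnd ℂ) b - c * (starRingEnd ℂ) d with hβ
  have hexp : ∀ z : ℂ, Q z = A0 * Complex.normSq z + 2 * (β * z).re + G0 := by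
    intro z
    rw [hA0, hG0, hβ]
    exact normSq_expand a b c d z
  have e : ∀ p : ℂ, Complex.normSq p = 1 → c * p + d ≠ 0 →
      A0 + 2 * (β * p).re + G0 = 0 := by
    intro p h1 h2
    have h3 := (hexp p).symm.trans (step3 p h1 h2)
    rw [h1] at h3
    linarith
  have q1 : c * 1 + d ≠ 0 → A0 + 2 * β.re + G0 = 0 := by
    intro h
    have := e 1 (by simp) h
    simpa using this
  have q2 : c * (-1) + d ≠ 0 → A0 - 2 * β.re + G0 = 0 := by
    intro h
    have := e (-1) (by simp) h
    simp [Complex.mul_re] at this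
    linarith
  have q3 : c * Complex.I + d ≠ 0 → A0 - 2 * β.im + G0 = 0 := by
    intro h
    have := e Complex.I (by simp) h
    simp [Complex.mul_re] at this
    linarith
  have q4 : c * (-Complex.I) + d ≠ 0 → A0 + 2 * β.im + G0 = 0 := by
    intro h
    have := e (-Complex.I) (by simp) h
    simp [Complex.mul_re] at this
    linarith
  have hmain : A0 + G0 = 0 ∧ β.re = 0 ∧ β.im = 0 := by
    by_cases h1 : c * 1 + d = 0
    · have h2 : c * (-1) + d ≠ 0 := fun h => by
        have := pole_unique hdet h1 h; norm_num [Complex.ext_iff] at this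
      have h3 : c * Complex.I + d ≠ 0 := fun h => by
        have := pole_unique hdet h1 h; norm_num [Complex.ext_iff] at this
      have h4 : c * (-Complex.I) + d ≠ 0 := fun h => by
        have := pole_unique hdet h1 h; norm_num [Complex.ext_iff] at this
      have e2 := q2 h2; have e3 := q3 h3; have e4 := q4 h4
      exact ⟨by linarith, by linarith, by linarith⟩
    · have e1 := q1 h1
      by_cases h2 : c * (-1) + d = 0
      · have h3 : c * Complex.I + d ≠ 0 := fun h => by
          have := pole_unique hdet h2 h; norm_num [Complex.ext_iff] at this
        have h4 : c * (-Complex.I) + d ≠ 0 := fun h => by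
          have := pole_unique hdet h2 h; norm_num [Complex.ext_iff] at this
        have e3 := q3 h3; have e4 := q4 h4
        exact ⟨by linarith, by linarith, by linarith⟩
      · have e2 := q2 h2
        by_cases h3 : c * Complex.I + d = 0
        · have h4 : c * (-Complex.I) + d ≠ 0 := fun h => by
            have := pole_unique hdet h3 h; norm_num [Complex.ext_iff] at this
          have e4 := q4 h4
          exact ⟨by linarith, by linarith, by linarith⟩
        · have e3 := q3 h3
          exact ⟨by linarith, by linarith, by linarith⟩
  obtain ⟨hS, hre, him⟩ := hmain
  have hβ0 : β = 0 := Complex.ext hre him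
  have hkey : ∀ z : ℂ, Q z = A0 * (Complex.normSq z - 1) := by
    intro z
    rw [hexp z, hβ0]
    have : G0 = -A0 := by linarith
    rw [this]
    simp
    ring
  -- positivity of A0
  have hApos : 0 < A0 := by
    have h9 : Complex.normSq (3 : ℂ) = 9 := by
      norm_num [Complex.normSq_apply]
    have h4' : Complex.normSq (2 : ℂ) = 4 := by
      norm_num [Complex.normSq_apply]
    by_cases hc2 : c * 2 + d = 0
    · have hc3 : c * 3 + d ≠ 0 := fun h => by
        have := pole_unique hdet hc2 h; norm_num [Complex.ext_iff] at this
      have := step1 3 (by rw [h9]; norm_num) hc3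
      rw [hkey 3, h9] at this
      nlinarith
    · have := step1 2 (by rw [h4']; norm_num) hc2
      rw [hkey 2, h4'] at this
      nlinarith
  -- |det| = A0
  have hcd : a * (starRingEnd ℂ) b = c * (starRingEnd ℂ) d := by
    have h0 : a * (starRingEnd ℂ) b - c * (starRingEnd ℂ) d = 0 := by rw [← hβ]; exact hβ0
    linear_combination h0
  have hxy : Complex.normSq a * Complex.normSq b = Complex.normSq c * Complex.normSq d := by
    have := congrArg Complex.normSq hcd
    simpa [Complex.normSq_mul, Complex.normSq_conj] using this
  have hx : Complex.normSq a = Complex.normSq c + A0 := by rw [hA0]; ring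
  have hy : Complex.normSq b = Complex.normSq d - A0 := by
    rw [hG0] at hS; linarith
  have hv : Complex.normSq d = Complex.normSq c + A0 := by
    have h0 : A0 * (Complex.normSq d - Complex.normSq c - A0) = 0 := by
      linear_combination hxy - Complex.normSq b * hx - (Complex.normSq c + A0) * hy
    rcases mul_eq_zero.1 h0 with h | h
    · exact absurd h (ne_of_gt hApos)
    · linarith
  have hre2 : a * d * (starRingEnd ℂ) (b * c)
      = ((Complex.normSq c * Complex.normSq d : ℝ) : ℂ) := by
    rw [map_mul]
    calc a * d * ((starRingEnd ℂ) b * (starRingEnd ℂ) c)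
        = (a * (starRingEnd ℂ) b) * (d * (starRingEnd ℂ) c) := by ring
      _ = (c * (starRingEnd ℂ) d) * (d * (starRingEnd ℂ) c) := by rw [hcd]
      _ = (c * (starRingEnd ℂ) c) * (d * (starRingEnd ℂ) d) := by ring
      _ = ((Complex.normSq c : ℂ)) * ((Complex.normSq d : ℂ)) := by
          rw [Complex.mul_conj, Complex.mul_conj]
      _ = _ := by push_cast; ring
  have hnsq : Complex.normSq (a * d - b * c) = A0 ^ 2 := by
    have hsub : Complex.normSq (a * d - b * c)
        = Complex.normSq (a * d) + Complex.normSq (b * c)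
          - 2 * (a * d * (starRingEnd ℂ) (b * c)).re := Complex.normSq_sub _ _
    rw [hsub, hre2, Complex.normSq_mul, Complex.normSq_mul, Complex.ofReal_re]
    linear_combination Complex.normSq d * hx + Complex.normSq c * hy + A0 * hv
  have habs : ‖a * d - b * c‖ = A0 := by
    rw [Complex.norm_def, hnsq, Real.sqrt_sq hApos.le]
  exact ⟨A0, hApos, habs, fun z => hkey z⟩



lemma hasDerivAt_mobius (a b c d z : ℂ) (hz : c * z + d ≠ 0) :
    HasDerivAt (mobius a b c d) ((a * d - b * c) / (c * z + d) ^ 2) z := by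
  have h1 : HasDerivAt (fun z : ℂ => a * z + b) a z := by
    simpa using ((hasDerivAt_id z).const_mul a).add_const b
  have h2 : HasDerivAt (fun z : ℂ => c * z + d) c z := by
    simpa using ((hasDerivAt_id z).const_mul c).add_const d
  have := h1.div h2 hz
  rw [show (a * d - b * c) / (c * z + d) ^ 2
      = (a * (c * z + d) - (a * z + b) * c) / (c * z + d) ^ 2 by ring]
  exact this

section params
variable {a b c d : ℂ} {A : ℝ}

lemma normSq_mobius (hkey : ∀ z : ℂ, Complex.normSq (a * z + b) - Complex.normSq (c * z + d)
      = A * (Complex.normSq z - 1)) {w : ℂ} (hw : c * w + d ≠ 0) :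
    Complex.normSq (mobius a b c d w)
      = 1 + A * (Complex.normSq w - 1) / Complex.normSq (c * w + d) := by
  have h3 : Complex.normSq (c * w + d) ≠ 0 := (Complex.normSq_pos.2 hw).ne'
  have h2 : Complex.normSq (mobius a b c d w)
      = Complex.normSq (a * w + b) / Complex.normSq (c * w + d) := Complex.normSq_div _ _
  rw [h2]
  have := hkey w
  rw [← this, sub_div, div_self h3]
  ring

lemma orbit_lemma (hdet : a * d - b * c ≠ 0) (hA : 0 < A)
    (habs : ‖a * d - b * c‖ = A)
    (hkey : ∀ z : ℂ, Complex.normSq (a * z + b) - Complex.normSq (c * z + d)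
      = A * (Complex.normSq z - 1)) :
    ∀ (n : ℕ) (z : ℂ), 1 < Complex.normSq z →
      (∀ i < n, c * ((mobius a b c d)^[i] z) + d ≠ 0) →
      1 < Complex.normSq ((mobius a b c d)^[n] z) ∧
        ∃ D : ℂ, HasDerivAt ((mobius a b c d)^[n]) D z ∧
          ‖D‖ * (Complex.normSq z - 1)
            = Complex.normSq ((mobius a b c d)^[n] z) - 1 := by
  intro n
  induction n with
  | zero =>
    intro z hz _
    refine ⟨by simpa using hz, 1, ?_, by simp⟩
    simpa using (hasDerivAt_id z)
  | succ n ih =>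
    intro z hz hP
    obtain ⟨hw, D, hD, habsD⟩ := ih z hz (fun i hi => hP i (Nat.lt_succ_of_lt hi))
    set w := (mobius a b c d)^[n] z with hwdef
    have hw2 : c * w + d ≠ 0 := hP n (Nat.lt_succ_self n)
    have h3 : (0:ℝ) < Complex.normSq (c * w + d) := Complex.normSq_pos.2 hw2
    have nms := normSq_mobius hkey hw2
    have hiter : (mobius a b c d)^[n+1] z = mobius a b c d w := by
      rw [Function.iterate_succ_apply']
    constructor
    · rw [hiter, nms]
      have : 0 < A * (Complex.normSq w - 1) / Complex.normSq (c * w + d) := by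
        apply div_pos (by nlinarith) h3
      linarith
    · refine ⟨(a * d - b * c) / (c * w + d) ^ 2 * D, ?_, ?_⟩
      · have hM := hasDerivAt_mobius a b c d w hw2
        have := hM.comp z hD
        rw [Function.iterate_succ' (mobius a b c d) n]
        exact this
      · have habs' : ‖(a * d - b * c) / (c * w + d) ^ 2 * D‖
            = A / Complex.normSq (c * w + d) * ‖D‖ := by
          rw [norm_mul, norm_div, norm_pow, habs, Complex.sq_norm]
        rw [habs', hiter, nms]
        have : A / Complex.normSq (c * w + d) * ‖D‖ * (Complex.normSq z - 1)
            = A / Complex.normSq (c * w + d) * (‖D‖ * (Complex.normSq z - 1)) := by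
          ring
        rw [this, habsD]
        field_simp
        ring

lemma disk_iter (hA : 0 < A)
    (hkey : ∀ z : ℂ, Complex.normSq (a * z + b) - Complex.normSq (c * z + d)
      = A * (Complex.normSq z - 1)) :
    ∀ (j : ℕ) (w : ℂ), Complex.normSq w < 1 →
      Complex.normSq ((mobius a b c d)^[j] w) < 1 := by
  intro j
  induction j with
  | zero => intro w hw; simpa using hw
  | succ j ih =>
    intro w hw
    rw [Function.iterate_succ_apply]
    apply ih
    have hw2 : c * w + d ≠ 0 := by
      intro h
      have := hkey w
      rw [h] at this
      simp only [Complex.normSq_zero] at this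
      nlinarith [Complex.normSq_nonneg (a * w + b)]
    have h3 : (0:ℝ) < Complex.normSq (c * w + d) := Complex.normSq_pos.2 hw2
    rw [normSq_mobius hkey hw2]
    have : A * (Complex.normSq w - 1) / Complex.normSq (c * w + d) < 0 := by
      apply div_neg_of_neg_of_pos (by nlinarith) h3
    linarith

lemma pole_unique' (hdet : a * d - b * c ≠ 0) {z w : ℂ}
    (hz : c * z + d = 0) (hw : c * w + d = 0) : z = w := by
  rcases eq_or_ne c 0 with rfl | hc
  · simp at hz; subst hz; simp at hdet
  · have h : c * z + d = c * w + d := by rw [hz, hw]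
    exact mul_left_cancel₀ hc (add_right_cancel h)

lemma mobius_linv' (hdet : a * d - b * c ≠ 0) (z : ℂ) (hz : c * z + d ≠ 0) :
    mobius d (-b) (-c) a (mobius a b c d z) = z := by
  have h1 : d * ((a * z + b) / (c * z + d)) + -b = (a * d - b * c) * z / (c * z + d) := by
    have hx : (a * z + b) / (c * z + d) * (c * z + d) = a * z + b := div_mul_cancel₀ _ hz
    rw [eq_div_iff hz]; linear_combination d * hx
  have h2 : -c * ((a * z + b) / (c * z + d)) + a = (a * d - b * c) / (c * z + d) := by
    field_simp; ring
  simp only [mobius, h1, h2]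
  field_simp

lemma linv_iter (hdet : a * d - b * c ≠ 0) :
    ∀ (j : ℕ) (z : ℂ), (∀ i < j, c * ((mobius a b c d)^[i] z) + d ≠ 0) →
      (mobius d (-b) (-c) a)^[j] ((mobius a b c d)^[j] z) = z := by
  intro j
  induction j with
  | zero => intro z _; simp
  | succ j ih =>
    intro z hP
    rw [Function.iterate_succ_apply' (mobius a b c d), Function.iterate_succ_apply]
    rw [mobius_linv' hdet _ (hP j (Nat.lt_succ_self j))]
    exact ih z (fun i hi => hP i (Nat.lt_succ_of_lt hi))

lemma firstHit_finite (hdet : a * d - b * c ≠ 0) (n : ℕ) :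
    Set.Finite {w : ℂ | ∃ j < n, c * ((mobius a b c d)^[j] w) + d = 0 ∧
      ∀ i < j, c * ((mobius a b c d)^[i] w) + d ≠ 0} := by
  have hsub : {w : ℂ | ∃ j < n, c * ((mobius a b c d)^[j] w) + d = 0 ∧
      ∀ i < j, c * ((mobius a b c d)^[i] w) + d ≠ 0} ⊆
      ⋃ j ∈ Finset.range n, {w : ℂ | c * ((mobius a b c d)^[j] w) + d = 0 ∧
        ∀ i < j, c * ((mobius a b c d)^[i] w) + d ≠ 0} := by
    rintro w ⟨j, hj, h1, h2⟩
    exact Set.mem_biUnion (Finset.mem_range.2 hj) ⟨h1, h2⟩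
  refine Set.Finite.subset (Set.Finite.biUnion (Finset.range n).finite_toSet ?_) hsub
  intro j _
  apply Set.Subsingleton.finite
  rintro w₁ ⟨h1, h2⟩ w₂ ⟨h3, h4⟩
  have heq : (mobius a b c d)^[j] w₁ = (mobius a b c d)^[j] w₂ := pole_unique' hdet h1 h3
  have e1 := linv_iter hdet j w₁ h2
  have e2 := linv_iter hdet j w₂ h4
  rw [← e1, ← e2, heq]

end params


/-- If `φ ∈ B_♯^X(𝔻*)` and `g` is a Möbius automorphism of `𝔻*` whose
iterates converge on `𝔻*` to a point `ξ ∈ 𝕊 \ X`, then the iterated pullbacks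
`(g*)ⁿφ(z) = φ(gⁿ(z)) ((gⁿ)'(z))²` converge to `0` pointwise on `𝔻*`. -/
theorem pullback_iterates_tendsto_zero (X : Set ℂ) (hX : X ⊆ unitCircle)
    (a b c d : ℂ) (hdet : a * d - b * c ≠ 0)
    (hbij : Set.BijOn (mobius a b c d) (extDisk \ {z : ℂ | c * z + d = 0})
      (extDisk \ {a / c}))
    (φ : ℂ → ℂ) (hφ : MemB φ) (hvan : BVanishRel X φ)
    (ξ : ℂ) (hξ : ξ ∈ unitCircle) (hξX : ξ ∉ X)
    (horb : ∀ w ∈ extDisk, Tendsto (fun n => (mobius a b c d)^[n] w) atTop (𝓝 ξ)) :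
    ∀ z ∈ extDisk,
      Tendsto (fun n : ℕ =>
          φ ((mobius a b c d)^[n] z) * (deriv ((mobius a b c d)^[n]) z) ^ 2)
        atTop (𝓝 0) := by
  intro z hz
  obtain ⟨A, hA, habs, hkey⟩ := key_identity a b c d hdet hbij
  set m : ℂ → ℂ := mobius a b c d with hm
  have hz' : (1:ℝ) < Complex.normSq z := mem_extDisk_iff.1 hz
  by_cases hgood : ∀ i : ℕ, c * (m^[i] z) + d ≠ 0
  · -- the orbit never meets the pole
    have horb' := horb z hz
    rw [NormedAddCommGroup.tendsto_nhds_zero]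
    intro ε hε
    have hz1 : (0:ℝ) < Complex.normSq z - 1 := by linarith
    have htpos : (0:ℝ) < (Complex.normSq z - 1) ^ 2 := by positivity
    obtain ⟨K, hKc, hKsub, hKlt⟩ := hvan (ε * (Complex.normSq z - 1) ^ 2)
      (by positivity)
    have hξK : ξ ∉ K := by
      intro h
      rcases hKsub h with h' | h'
      · have h1 : (1:ℝ) < ‖ξ‖ := h'
        have h2 : ‖ξ‖ = 1 := hξ
        rw [h2] at h1; exact lt_irrefl _ h1
      · exact hξX h'
    have hKcompl : Kᶜ ∈ 𝓝 ξ := hKc.isClosed.isOpen_compl.mem_nhds hξK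
    filter_upwards [horb'.eventually_mem hKcompl] with n hn
    obtain ⟨hwn, D, hD, habsD⟩ := orbit_lemma hdet hA habs hkey n z hz' (fun i _ => hgood i)
    rw [hD.deriv]
    set w := m^[n] z with hwdef
    have hwe : w ∈ extDisk := mem_extDisk_iff.2 hwn
    have hbw := hKlt w ⟨hwe, hn⟩
    have hb1 : bweight w = (Complex.normSq w - 1) ^ 2 := by
      unfold bweight
      rw [Complex.sq_norm]
    have hDabs : ‖D‖ = (Complex.normSq w - 1) / (Complex.normSq z - 1) := by
      rw [eq_div_iff (ne_of_gt hz1)]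
      exact habsD
    have hnorm : ‖φ w * D ^ 2‖ = ‖φ w‖ * (‖D‖) ^ 2 := by
      simp [norm_mul, norm_pow]
    rw [hnorm, hDabs, div_pow, ← mul_div_assoc, div_lt_iff₀ htpos]
    calc ‖φ w‖ * (Complex.normSq w - 1) ^ 2
        = bweight w * ‖φ w‖ := by rw [hb1]; ring
      _ < ε * (Complex.normSq z - 1) ^ 2 := hbw
  · -- the orbit meets the pole at some least time k
    push_neg at hgood
    obtain ⟨i₀, hi₀⟩ := hgood
    have hex : ∃ i, c * (m^[i] z) + d = 0 := ⟨i₀, hi₀⟩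
    set k := Nat.find hex with hkdef
    have hk : c * (m^[k] z) + d = 0 := Nat.find_spec hex
    have hmin : ∀ i < k, c * (m^[i] z) + d ≠ 0 := fun i hi => Nat.find_min hex hi
    refine Tendsto.congr' ?_ tendsto_const_nhds
    filter_upwards [eventually_ge_atTop (k+1)] with n hn
    have hdisk : Complex.normSq (m^[n] z) < 1 := by
      have h1 : m^[k+1] z = 0 := by
        rw [Function.iterate_succ_apply']
        show (a * (m^[k] z) + b) / (c * (m^[k] z) + d) = 0
        rw [hk, _root_.div_zero]
      have h2 : m^[n] z = m^[n-(k+1)] (m^[k+1] z) := by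
        rw [← Function.iterate_add_apply]
        congr 1
        omega
      rw [h2, h1]
      exact disk_iter hA hkey _ 0 (by simp)
    have hnd : ¬ DifferentiableAt ℂ (m^[n]) z := by
      intro hdiff
      have hcont := hdiff.continuousAt
      set S : Set ℂ := {w : ℂ | ∃ j < n, c * (m^[j] w) + d = 0 ∧
        ∀ i < j, c * (m^[i] w) + d ≠ 0} with hSdef
      have hSfin : S.Finite := firstHit_finite hdet n
      have hopen : IsOpen extDisk := by
        have : extDisk = (fun z : ℂ => ‖z‖) ⁻¹' (Set.Ioi 1) := rfl
        rw [this]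
        exact isOpen_Ioi.preimage continuous_norm
      have h1 : extDisk ∈ 𝓝 z := hopen.mem_nhds hz
      have h2 : (S \ {z})ᶜ ∈ 𝓝 z := by
        apply ((hSfin.subset Set.diff_subset).isClosed).isOpen_compl.mem_nhds
        simp
      have hev2 : ∀ᶠ w in 𝓝[≠] z, (1:ℝ) ≤ Complex.normSq (m^[n] w) := by
        filter_upwards [nhdsWithin_le_nhds h1, nhdsWithin_le_nhds h2,
          self_mem_nhdsWithin] with w hw1 hw2 (hw3 : w ≠ z)
        have hwS : w ∉ S := by
          intro hS
          exact hw2 ⟨hS, hw3⟩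
        have hwgood : ∀ i < n, c * (m^[i] w) + d ≠ 0 := by
          intro i hi
          by_contra hbad
          have hex2 : ∃ i, c * (m^[i] w) + d = 0 := ⟨i, hbad⟩
          refine hwS ⟨Nat.find hex2, ?_, Nat.find_spec hex2,
            fun i' hi' => Nat.find_min hex2 hi'⟩
          exact lt_of_le_of_lt (Nat.find_min' hex2 hbad) hi
        exact (orbit_lemma hdet hA habs hkey n w (mem_extDisk_iff.1 hw1) hwgood).1.le
      have htends : Tendsto (fun w => Complex.normSq (m^[n] w)) (𝓝[≠] z)
          (𝓝 (Complex.normSq (m^[n] z))) :=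
        (Complex.continuous_normSq.tendsto _).comp
          (hcont.tendsto.mono_left nhdsWithin_le_nhds)
      have : (1:ℝ) ≤ Complex.normSq (m^[n] z) := ge_of_tendsto htends hev2
      linarith
    have hder : deriv (m^[n]) z = 0 := deriv_zero_of_not_differentiableAt hnd
    show (0:ℂ) = _
    rw [hder]
    ring
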